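/- Let G be an unmixed bipartite graph on {x_1,...,x_n} ∪ {y_1,...,y_n} (satisfying conditions (a) and (b)) with n ≥ 2, containing K_{{i,j}} as an induced subgraph for some i < j, and let H be the induced subgraph on the vertices minus {x_j,y_j}. Then the map ν : L_H → L_G defined by ν(α) = α ∪ {p_j} if p_i ∈ α and ν(α) = α otherwise, is a lattice isomorphism (an order isomorphism preserving unions and intersections). -/
import Mathlib


/-- `C` is a vertex cover of the subgraph of the bipartite graph with
edge relation `E` (edges `{x i, y j}` for `E i j`) induced on the vertices
`{x i, y i : i ∈ F}`. -/
def IsCoverOn (n : ℕ) (E : Fin n → Fin n → Prop) (F : Set (Fin n))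
    (C : Set (Fin n ⊕ Fin n)) : Prop :=
  (∀ v ∈ C, Sum.elim (· ∈ F) (· ∈ F) v) ∧
  (∀ i ∈ F, ∀ j ∈ F, E i j → Sum.inl i ∈ C ∨ Sum.inr j ∈ C)

/-- `C` is a minimal vertex cover of the induced subgraph on `F`. -/
def IsMinCoverOn (n : ℕ) (E : Fin n → Fin n → Prop) (F : Set (Fin n))
    (C : Set (Fin n ⊕ Fin n)) : Prop :=
  IsCoverOn n E F C ∧ ∀ D ⊂ C, ¬ IsCoverOn n E F D

/-- The vertex set `{x k : k ∈ α} ∪ {y k : k ∈ F \ α}` attached to `α ⊆ F`. -/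
def coverSetOn (n : ℕ) (F α : Set (Fin n)) : Set (Fin n ⊕ Fin n) :=
  (Sum.inl '' α) ∪ (Sum.inr '' (F \ α))

/-- The lattice `L_{G_F}` of the induced subgraph `G_F`: those `α ⊆ F` whose
associated vertex set is a minimal vertex cover of `G_F`. -/
def LGF (n : ℕ) (E : Fin n → Fin n → Prop) (F : Set (Fin n)) : Set (Set (Fin n)) :=
  {α | α ⊆ F ∧ IsMinCoverOn n E F (coverSetOn n F α)}

lemma mem_LGF_iff (n : ℕ) (E : Fin n → Fin n → Prop) (ha : ∀ i, E i i)
    (F α : Set (Fin n)) :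
    α ∈ LGF n E F ↔ α ⊆ F ∧ ∀ a ∈ F, ∀ b ∈ F, E a b → b ∈ α → a ∈ α := by
  constructor
  · rintro ⟨hsub, ⟨⟨_, hcov⟩, _⟩⟩
    refine ⟨hsub, fun a haF b hbF hab hbα => ?_⟩
    rcases hcov a haF b hbF hab with h | h
    · rcases h with ⟨k, hk, hk2⟩ | ⟨k, hk, hk2⟩
      · cases Sum.inl.inj hk2; exact hk
      · cases hk2
    · rcases h with ⟨k, hk, hk2⟩ | ⟨k, hk, hk2⟩
      · cases hk2
      · cases Sum.inr.inj hk2; exact absurd hbα hk.2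
  · rintro ⟨hsub, hcl⟩
    refine ⟨hsub, ⟨⟨?_, ?_⟩, ?_⟩⟩
    · rintro v (⟨k, hk, rfl⟩ | ⟨k, hk, rfl⟩)
      · exact hsub hk
      · exact hk.1
    · intro a haF b hbF hab
      by_cases hbα : b ∈ α
      · exact Or.inl (Or.inl ⟨a, hcl a haF b hbF hab hbα, rfl⟩)
      · exact Or.inr (Or.inr ⟨b, ⟨hbF, hbα⟩, rfl⟩)
    · rintro D hD ⟨_, hDcov⟩
      obtain ⟨v, hvC, hvD⟩ := Set.exists_of_ssubset hD
      rcases hvC with ⟨k, hk, rfl⟩ | ⟨k, hk, rfl⟩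
      · rcases hDcov k (hsub hk) k (hsub hk) (ha k) with h | h
        · exact hvD h
        · rcases hD.1 h with ⟨m, hm, hm2⟩ | ⟨m, hm, hm2⟩
          · cases hm2
          · cases Sum.inr.inj hm2; exact hm.2 hk
      · rcases hDcov k hk.1 k hk.1 (ha k) with h | h
        · rcases hD.1 h with ⟨m, hm, hm2⟩ | ⟨m, hm, hm2⟩
          · cases Sum.inl.inj hm2; exact hk.2 hm
          · cases hm2
        · exact hvD h

open Classical in
/-- Corollary 1.3: with `K_{{i,j}}` an induced subgraph of `G` and `H` the
induced subgraph on the vertices other than `x j, y j`, the map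
`ν(α) = α ∪ {p j}` if `p i ∈ α`, `ν(α) = α` otherwise, is a lattice
isomorphism `L_H ≃ L_G`. -/
theorem stmt5 (n : ℕ) (hn : 2 ≤ n) (E : Fin n → Fin n → Prop)
    (ha : ∀ i, E i i)
    (hb : ∀ i j k : Fin n, i ≠ j → j ≠ k → i ≠ k → E i j → E j k → E i k)
    (i j : Fin n) (hij : i < j) (hEij : E i j) (hEji : E j i) :
    let LH := LGF n E {k | k ≠ j}
    let LG := LGF n E Set.univ
    let ν : Set (Fin n) → Set (Fin n) := fun α => if i ∈ α then α ∪ {j} else α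
    Set.BijOn ν LH LG ∧
    (∀ α ∈ LH, ∀ β ∈ LH, (α ⊆ β ↔ ν α ⊆ ν β)) ∧
    (∀ α ∈ LH, ∀ β ∈ LH, ν (α ∪ β) = ν α ∪ ν β ∧ ν (α ∩ β) = ν α ∩ ν β) := by
  intro LH LG ν
  have hne : i ≠ j := hij.ne
  have hmemH : ∀ α, α ∈ LH ↔ (j ∉ α ∧
      ∀ a b : Fin n, a ≠ j → b ≠ j → E a b → b ∈ α → a ∈ α) := by
    intro α
    rw [show (α ∈ LH) = (α ∈ LGF n E {k | k ≠ j}) from rfl, mem_LGF_iff n E ha]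
    constructor
    · rintro ⟨hs, hc⟩
      exact ⟨fun h => hs h rfl, fun a b haj hbj => hc a haj b hbj⟩
    · rintro ⟨hj, hc⟩
      exact ⟨fun x hx hxj => hj (hxj ▸ hx), fun a haj b hbj => hc a b haj hbj⟩
  have hmemG : ∀ α, α ∈ LG ↔ ∀ a b : Fin n, E a b → b ∈ α → a ∈ α := by
    intro α
    rw [show (α ∈ LG) = (α ∈ LGF n E Set.univ) from rfl, mem_LGF_iff n E ha]
    constructor
    · rintro ⟨_, hc⟩
      exact fun a b => hc a trivial b trivial
    · intro hc
      exact ⟨fun _ _ => trivial, fun a _ b _ => hc a b⟩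
  have hνpos : ∀ α, i ∈ α → ν α = α ∪ {j} := fun α h => if_pos h
  have hνneg : ∀ α, i ∉ α → ν α = α := fun α h => if_neg h
  -- MapsTo
  have hmaps : ∀ α ∈ LH, ν α ∈ LG := by
    intro α hα
    obtain ⟨hjα, hcl⟩ := (hmemH α).1 hα
    rw [hmemG]
    by_cases hiα : i ∈ α
    · rw [hνpos α hiα]
      intro a c hac hcm
      rcases hcm with hcm | hcm
      · by_cases haj : a = j
        · exact Or.inr (by simp [haj])
        · exact Or.inl (hcl a c haj (fun h => hjα (h ▸ hcm)) hac hcm)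
      · have hcj : c = j := hcm
        by_cases haj : a = j
        · exact Or.inr (by simp [haj])
        · by_cases hai : a = i
          · exact Or.inl (hai ▸ hiα)
          · exact Or.inl (hcl a i haj hne
              (hb a j i haj hne.symm hai (hcj ▸ hac) hEji) hiα)
    · rw [hνneg α hiα]
      intro a c hac hcα
      have hcj : c ≠ j := fun h => hjα (h ▸ hcα)
      by_cases haj : a = j
      · subst haj
        by_cases hci : c = i
        · exact absurd (hci ▸ hcα) hiα
        · exact absurd (hcl i c hne hcj
            (hb i a c hne hcj.symm (fun h => hci h.symm) hEij hac) hcα) hiα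
      · exact hcl a c haj hcj hac hcα
  -- InjOn
  have hinj : Set.InjOn ν LH := by
    intro α hα β hβ hEq
    have hjα : j ∉ α := ((hmemH α).1 hα).1
    have hjβ : j ∉ β := ((hmemH β).1 hβ).1
    by_cases hiα : i ∈ α <;> by_cases hiβ : i ∈ β
    · rw [hνpos α hiα, hνpos β hiβ] at hEq
      ext x
      by_cases hxj : x = j
      · subst hxj; simp [hjα, hjβ]
      · constructor
        · intro hx
          rcases (Set.ext_iff.1 hEq x).1 (Or.inl hx) with h | h
          · exact h
          · exact absurd h hxj
        · intro hx
          rcases (Set.ext_iff.1 hEq x).2 (Or.inl hx) with h | h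
          · exact h
          · exact absurd h hxj
    · rw [hνpos α hiα, hνneg β hiβ] at hEq
      exact absurd ((Set.ext_iff.1 hEq j).1 (Or.inr rfl)) hjβ
    · rw [hνneg α hiα, hνpos β hiβ] at hEq
      exact absurd ((Set.ext_iff.1 hEq j).2 (Or.inr rfl)) hjα
    · rwa [hνneg α hiα, hνneg β hiβ] at hEq
  -- SurjOn
  have hsurj : Set.SurjOn ν LH LG := by
    intro γ hγ
    have hcl := (hmemG γ).1 hγ
    have hiffij : i ∈ γ ↔ j ∈ γ :=
      ⟨fun h => hcl j i hEji h, fun h => hcl i j hEij h⟩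
    refine ⟨γ \ {j}, ?_, ?_⟩
    · rw [hmemH]
      refine ⟨fun h => h.2 rfl, fun a c haj hcj hac hcm => ⟨hcl a c hac hcm.1, haj⟩⟩
    · by_cases hiγ : i ∈ γ
      · have hiα : i ∈ γ \ {j} := ⟨hiγ, hne⟩
        rw [hνpos _ hiα]
        ext x
        by_cases hxj : x = j
        · subst hxj; simp [hiffij.1 hiγ]
        · simp [hxj]
      · have hiα : i ∉ γ \ {j} := fun h => hiγ h.1
        rw [hνneg _ hiα]
        have hjγ : j ∉ γ := fun h => hiγ (hiffij.2 h)
        ext x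
        simp only [Set.mem_diff, Set.mem_singleton_iff]
        exact ⟨fun h => h.1, fun h => ⟨h, fun hx => hjγ (hx ▸ h)⟩⟩
  refine ⟨⟨hmaps, hinj, hsurj⟩, ?_, ?_⟩
  -- order
  · intro α hα β hβ
    have hjα : j ∉ α := ((hmemH α).1 hα).1
    have hjβ : j ∉ β := ((hmemH β).1 hβ).1
    constructor
    · intro hsub
      by_cases hiα : i ∈ α
      · rw [hνpos α hiα, hνpos β (hsub hiα)]
        exact Set.union_subset_union_left _ hsub
      · rw [hνneg α hiα]
        intro x hx
        by_cases hiβ : i ∈ β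
        · rw [hνpos β hiβ]; exact Or.inl (hsub hx)
        · rw [hνneg β hiβ]; exact hsub hx
    · intro hsub x hx
      have hxj : x ≠ j := fun h => hjα (h ▸ hx)
      have hx1 : x ∈ ν α := by
        by_cases hiα : i ∈ α
        · rw [hνpos α hiα]; exact Or.inl hx
        · rw [hνneg α hiα]; exact hx
      have hx2 : x ∈ ν β := hsub hx1
      by_cases hiβ : i ∈ β
      · rw [hνpos β hiβ] at hx2
        rcases hx2 with h | h
        · exact h
        · exact absurd h hxj
      · rwa [hνneg β hiβ] at hx2
  -- lattice operations
  · intro α hα β hβ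
    have hjα : j ∉ α := ((hmemH α).1 hα).1
    have hjβ : j ∉ β := ((hmemH β).1 hβ).1
    constructor
    · by_cases hiα : i ∈ α <;> by_cases hiβ : i ∈ β
      · rw [hνpos α hiα, hνpos β hiβ, hνpos _ (Or.inl hiα : i ∈ α ∪ β)]
        ext x; simp only [Set.mem_union]; tauto
      · rw [hνpos α hiα, hνneg β hiβ, hνpos _ (Or.inl hiα : i ∈ α ∪ β)]
        ext x; simp only [Set.mem_union]; tauto
      · rw [hνneg α hiα, hνpos β hiβ, hνpos _ (Or.inr hiβ : i ∈ α ∪ β)]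
        ext x; simp only [Set.mem_union]; tauto
      · rw [hνneg α hiα, hνneg β hiβ,
          hνneg _ (fun h => h.elim hiα hiβ : i ∉ α ∪ β)]
    · by_cases hiα : i ∈ α <;> by_cases hiβ : i ∈ β
      · rw [hνpos α hiα, hνpos β hiβ, hνpos _ (⟨hiα, hiβ⟩ : i ∈ α ∩ β)]
        ext x
        simp only [Set.mem_union, Set.mem_inter_iff, Set.mem_singleton_iff]
        tauto
      · rw [hνpos α hiα, hνneg β hiβ, hνneg _ (fun h => hiβ h.2 : i ∉ α ∩ β)]
        ext x
        simp only [Set.mem_union, Set.mem_inter_iff, Set.mem_singleton_iff]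
        constructor
        · intro h; exact ⟨Or.inl h.1, h.2⟩
        · rintro ⟨h1 | h1, h2⟩
          · exact ⟨h1, h2⟩
          · exact absurd (h1 ▸ h2) hjβ
      · rw [hνneg α hiα, hνpos β hiβ, hνneg _ (fun h => hiα h.1 : i ∉ α ∩ β)]
        ext x
        simp only [Set.mem_union, Set.mem_inter_iff, Set.mem_singleton_iff]
        constructor
        · intro h; exact ⟨h.1, Or.inl h.2⟩
        · rintro ⟨h1, h2 | h2⟩
          · exact ⟨h1, h2⟩
          · exact absurd (h2 ▸ h1) hjα
      · rw [hνneg α hiα, hνneg β hiβ, hνneg _ (fun h => hiα h.1 : i ∉ α ∩ β)]
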